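/- Let E be a symmetric function space on [0,∞) and 1 < p, q < ∞ with 1/p + 1/q = 1. For measurable functions x, y vanishing at infinity in measure with x ∈ E^{1/p} and y ∈ E^{1/q}, the product xy belongs to E and ‖xy‖_E ≤ 4 ‖x‖_{E^{1/p}} ‖y‖_{E^{1/q}}, where ‖x‖_{E^{1/p}} = ‖|x|^p‖_E^{1/p}. -/

import Mathlib

open MeasureTheory

/-- The decreasing rearrangement of `|f|` with respect to the measure `μ`. -/
noncomputable def rearr {α : Type*} [MeasurableSpace α] (μ : Measure α)
    (f : α → ℝ) (t : ℝ) : ℝ :=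
  sInf {s : ℝ | 0 ≤ s ∧ μ {u | s < |f u|} ≤ ENNReal.ofReal t}

/-- `f` vanishes at infinity in measure: every level set `{|f| > ε}` with `ε > 0`
has finite measure. -/
def VanishesInMeasure {α : Type*} [MeasurableSpace α] (μ : Measure α) (f : α → ℝ) : Prop :=
  ∀ ε : ℝ, 0 < ε → μ {u | ε < |f u|} < ⊤

/-- A symmetric function space on a measure space: a linear subspace of the measurable
functions vanishing at infinity in measure, with a complete norm that is monotone with
respect to comparison of decreasing rearrangements. -/
structure SymmFnSpace (α : Type*) [MeasurableSpace α] (μ : Measure α) where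
  carrier : Set (α → ℝ)
  N : (α → ℝ) → ℝ
  zero_mem : (0 : α → ℝ) ∈ carrier
  add_mem : ∀ {x y : α → ℝ}, x ∈ carrier → y ∈ carrier → x + y ∈ carrier
  smul_mem : ∀ (c : ℝ) {x : α → ℝ}, x ∈ carrier → c • x ∈ carrier
  measurable_mem : ∀ {x : α → ℝ}, x ∈ carrier → Measurable x
  vanish_mem : ∀ {x : α → ℝ}, x ∈ carrier → VanishesInMeasure μ x
  norm_nonneg : ∀ x : α → ℝ, 0 ≤ N x
  norm_eq_zero : ∀ {x : α → ℝ}, x ∈ carrier → N x = 0 → x =ᵐ[μ] 0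
  norm_add_le : ∀ {x y : α → ℝ}, x ∈ carrier → y ∈ carrier → N (x + y) ≤ N x + N y
  norm_smul : ∀ (c : ℝ) (x : α → ℝ), N (c • x) = |c| * N x
  symm : ∀ {x y : α → ℝ}, Measurable x → VanishesInMeasure μ x → y ∈ carrier →
    (∀ t : ℝ, 0 < t → rearr μ x t ≤ rearr μ y t) → x ∈ carrier ∧ N x ≤ N y
  complete : ∀ f : ℕ → (α → ℝ), (∀ n, f n ∈ carrier) →
    (∀ ε : ℝ, 0 < ε → ∃ n₀, ∀ m ≥ n₀, ∀ n ≥ n₀, N (f m - f n) < ε) →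
    ∃ g ∈ carrier, ∀ ε : ℝ, 0 < ε → ∃ n₀, ∀ n ≥ n₀, N (f n - g) < ε

open scoped ENNReal

/-- Lebesgue measure on the half-line `[0, ∞)`. -/
noncomputable def mu0 : MeasureTheory.Measure ℝ := MeasureTheory.volume.restrict (Set.Ici 0)

/-- The Hölder-type inequality with constant `4` in a symmetric function space on `[0,∞)`:
if `1/p + 1/q = 1`, `x ∈ E^{1/p}` and `y ∈ E^{1/q}`, then `xy ∈ E` and
`‖xy‖_E ≤ 4 ‖x‖_{E^{1/p}} ‖y‖_{E^{1/q}}` where `‖x‖_{E^{1/p}} = ‖|x|^p‖_E^{1/p}`. -/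
lemma rearr_mono_aux {α : Type*} [MeasurableSpace α] {μ : Measure α} {f g : α → ℝ}
    (hfg : ∀ u, |f u| ≤ |g u|) (hg : Measurable g) (hgv : VanishesInMeasure μ g)
    {t : ℝ} (ht : 0 < t) : rearr μ f t ≤ rearr μ g t := by
  have hsub : {s : ℝ | 0 ≤ s ∧ μ {u | s < |g u|} ≤ ENNReal.ofReal t} ⊆
      {s : ℝ | 0 ≤ s ∧ μ {u | s < |f u|} ≤ ENNReal.ofReal t} := by
    rintro s ⟨hs0, hs⟩
    refine ⟨hs0, le_trans (measure_mono ?_) hs⟩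
    intro u hu
    exact lt_of_lt_of_le hu (hfg u)
  have hne : Set.Nonempty {s : ℝ | 0 ≤ s ∧ μ {u | s < |g u|} ≤ ENNReal.ofReal t} := by
    obtain ⟨n, hn⟩ : ∃ n : ℕ, μ {u | (n : ℝ) + 1 < |g u|} ≤ ENNReal.ofReal t := by
      have hmeas : ∀ n : ℕ, MeasureTheory.NullMeasurableSet {u | (n : ℝ) + 1 < |g u|} μ :=
        fun n => (measurableSet_lt measurable_const hg.abs).nullMeasurableSet
      have hanti : Antitone (fun n : ℕ => {u | (n : ℝ) + 1 < |g u|}) := by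
        intro m n hmn u hu
        have : (m : ℝ) + 1 ≤ (n : ℝ) + 1 := by
          have : (m : ℝ) ≤ n := Nat.cast_le.2 hmn
          linarith
        exact lt_of_le_of_lt this hu
      have hfin : ∃ n : ℕ, μ {u | (n : ℝ) + 1 < |g u|} ≠ ⊤ := by
        refine ⟨0, ?_⟩
        have h1 := hgv 1 one_pos
        refine ne_of_lt (lt_of_le_of_lt (measure_mono ?_) h1)
        intro u hu
        simp only [Set.mem_setOf_eq] at hu ⊢
        simpa using lt_of_le_of_lt (by norm_num) hu
      have hiInter : ⋂ n : ℕ, {u | (n : ℝ) + 1 < |g u|} = (∅ : Set α) := by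
        ext u
        simp only [Set.mem_iInter, Set.mem_setOf_eq, Set.mem_empty_iff_false, iff_false,
          not_forall, not_lt]
        exact ⟨⌈|g u|⌉₊, (Nat.le_ceil _).trans (le_add_of_nonneg_right zero_le_one)⟩
      have htend := MeasureTheory.tendsto_measure_iInter_atTop hmeas hanti hfin
      rw [hiInter, measure_empty] at htend
      have hev : ∀ᶠ n : ℕ in Filter.atTop,
          (μ ∘ fun n : ℕ => {u | (n : ℝ) + 1 < |g u|}) n < ENNReal.ofReal t :=
        htend.eventually_lt_const (by simpa using ENNReal.ofReal_pos.2 ht)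
      obtain ⟨n, hn⟩ := hev.exists
      exact ⟨n, hn.le⟩
    exact ⟨(n : ℝ) + 1, by positivity, hn⟩
  exact csInf_le_csInf ⟨0, fun s hs => hs.1⟩ hne hsub

theorem holder_four {E : SymmFnSpace ℝ mu0} (p q : ℝ) (hp : 1 < p) (hq : 1 < q)
    (hpq : 1 / p + 1 / q = 1) (x y : ℝ → ℝ) (hxm : Measurable x) (hym : Measurable y)
    (hx : (fun u => |x u| ^ p) ∈ E.carrier) (hy : (fun u => |y u| ^ q) ∈ E.carrier) :
    x * y ∈ E.carrier ∧
    E.N (x * y) ≤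
      4 * ((E.N fun u => |x u| ^ p) ^ (1 / p) * (E.N fun u => |y u| ^ q) ^ (1 / q)) := by
  have hpq' : Real.HolderConjugate p q := Real.holderConjugate_iff.mpr ⟨hp, by simpa [one_div] using hpq⟩
  have hp0 : (0 : ℝ) < p := hpq'.pos
  have hq0 : (0 : ℝ) < q := hpq'.symm.pos
  set xP : ℝ → ℝ := fun u => |x u| ^ p with hxP
  set yQ : ℝ → ℝ := fun u => |y u| ^ q with hyQ
  set A := E.N xP with hA
  set B := E.N yQ with hB
  have hA0 : 0 ≤ A := E.norm_nonneg _
  have hB0 : 0 ≤ B := E.norm_nonneg _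
  have key : ∀ lam : ℝ, 0 < lam →
      x * y ∈ E.carrier ∧ E.N (x * y) ≤ lam ^ p / p * A + lam ^ (-q) / q * B := by
    intro lam hlam
    set c1 := lam ^ p / p with hc1
    set c2 := lam ^ (-q) / q with hc2
    have hc1p : 0 < c1 := div_pos (Real.rpow_pos_of_pos hlam p) hp0
    have hc2p : 0 < c2 := div_pos (Real.rpow_pos_of_pos hlam (-q)) hq0
    set z : ℝ → ℝ := c1 • xP + c2 • yQ with hzdef
    have hzmem : z ∈ E.carrier := E.add_mem (E.smul_mem c1 hx) (E.smul_mem c2 hy)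
    have hzu : ∀ u, z u = c1 * |x u| ^ p + c2 * |y u| ^ q := fun u => rfl
    have hznn : ∀ u, 0 ≤ z u := fun u => by
      rw [hzu u]
      have := Real.rpow_nonneg (abs_nonneg (x u)) p
      have := Real.rpow_nonneg (abs_nonneg (y u)) q
      positivity
    have hpt : ∀ u, |(x * y) u| ≤ |z u| := by
      intro u
      rw [abs_of_nonneg (hznn u), hzu u]
      have hY := Real.young_inequality_of_nonneg
        (mul_nonneg hlam.le (abs_nonneg (x u)))
        (mul_nonneg (inv_nonneg.2 hlam.le) (abs_nonneg (y u))) hpq'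
      have h1 : lam * |x u| * (lam⁻¹ * |y u|) = |(x * y) u| := by
        rw [Pi.mul_apply, abs_mul]
        field_simp
      have h2 : (lam * |x u|) ^ p = lam ^ p * |x u| ^ p :=
        Real.mul_rpow hlam.le (abs_nonneg _)
      have h3 : (lam⁻¹ * |y u|) ^ q = lam ^ (-q) * |y u| ^ q := by
        rw [Real.mul_rpow (inv_nonneg.2 hlam.le) (abs_nonneg _),
          Real.inv_rpow hlam.le, ← Real.rpow_neg hlam.le]
      rw [h1, h2, h3] at hY
      refine hY.trans (le_of_eq ?_)
      rw [hc1, hc2]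
      ring
    have hxym : Measurable (x * y) := hxm.mul hym
    have hzmeas := E.measurable_mem hzmem
    have hzvan := E.vanish_mem hzmem
    have hxyvan : VanishesInMeasure mu0 (x * y) := by
      intro ε hε
      refine lt_of_le_of_lt (measure_mono ?_) (hzvan ε hε)
      intro u hu
      exact lt_of_lt_of_le hu (hpt u)
    have hrearr : ∀ t : ℝ, 0 < t → rearr mu0 (x * y) t ≤ rearr mu0 z t :=
      fun t ht => rearr_mono_aux hpt hzmeas hzvan ht
    obtain ⟨hmem, hle⟩ := E.symm hxym hxyvan hzmem hrearr
    refine ⟨hmem, hle.trans ?_⟩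
    calc E.N z ≤ E.N (c1 • xP) + E.N (c2 • yQ) :=
          E.norm_add_le (E.smul_mem c1 hx) (E.smul_mem c2 hy)
      _ = c1 * A + c2 * B := by
          rw [E.norm_smul, E.norm_smul, abs_of_pos hc1p, abs_of_pos hc2p]
      _ = lam ^ p / p * A + lam ^ (-q) / q * B := by rw [hc1, hc2]
  refine ⟨(key 1 one_pos).1, ?_⟩
  have hbound : ∀ ε : ℝ, 0 < ε →
      E.N (x * y) ≤ (A + ε) ^ (1 / p) * (B + ε) ^ (1 / q) := by
    intro ε hε
    have hA' : 0 < A + ε := by linarith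
    have hB' : 0 < B + ε := by linarith
    set lam := ((B + ε) / (A + ε)) ^ (1 / (p * q)) with hlamdef
    have hxpos : 0 < (B + ε) / (A + ε) := div_pos hB' hA'
    have hlp : 0 < lam := Real.rpow_pos_of_pos hxpos _
    set D := (A + ε) ^ (1 / p) * (B + ε) ^ (1 / q) with hD
    have haq : (0 : ℝ) < (A + ε) ^ (1 / q) := Real.rpow_pos_of_pos hA' _
    have hbp : (0 : ℝ) < (B + ε) ^ (1 / p) := Real.rpow_pos_of_pos hB' _
    have h1 : lam ^ p * (A + ε) = D := by
      rw [hlamdef, ← Real.rpow_mul hxpos.le]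
      have he : 1 / (p * q) * p = 1 / q := by
        field_simp
      rw [he, Real.div_rpow hB'.le hA'.le]
      have ha : (A + ε) ^ (1 / p) = (A + ε) / (A + ε) ^ (1 / q) := by
        have h : (1 : ℝ) / p = 1 - 1 / q := by linarith
        rw [h, Real.rpow_sub hA', Real.rpow_one]
      rw [hD, ha]
      field_simp
    have h2 : lam ^ (-q) * (B + ε) = D := by
      rw [hlamdef, ← Real.rpow_mul hxpos.le]
      have he : 1 / (p * q) * (-q) = -(1 / p) := by
        field_simp
      rw [he, Real.rpow_neg hxpos.le, Real.div_rpow hB'.le hA'.le]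
      have hb : (B + ε) ^ (1 / q) = (B + ε) / (B + ε) ^ (1 / p) := by
        have h : (1 : ℝ) / q = 1 - 1 / p := by linarith
        rw [h, Real.rpow_sub hB', Real.rpow_one]
      rw [hD, hb]
      field_simp
    have hkey := (key lam hlp).2
    calc E.N (x * y) ≤ lam ^ p / p * A + lam ^ (-q) / q * B := hkey
      _ ≤ lam ^ p / p * (A + ε) + lam ^ (-q) / q * (B + ε) := by
          have hp1 : 0 < lam ^ p / p := div_pos (Real.rpow_pos_of_pos hlp p) hp0
          have hp2 : 0 < lam ^ (-q) / q := div_pos (Real.rpow_pos_of_pos hlp (-q)) hq0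
          nlinarith
      _ = D / p + D / q := by
          rw [div_mul_eq_mul_div, div_mul_eq_mul_div, h1, h2]
      _ = D := by
          have : D / p + D / q = D * (1 / p + 1 / q) := by ring
          rw [this, hpq, mul_one]
  have c1 : ContinuousAt (fun ε : ℝ => (A + ε) ^ (1 / p)) 0 := by
    have h : ContinuousAt (fun s : ℝ => s ^ (1 / p)) ((fun ε : ℝ => A + ε) 0) :=
      Real.continuousAt_rpow_const _ _ (Or.inr (by positivity))
    exact h.comp (continuousAt_const.add continuousAt_id)
  have c2 : ContinuousAt (fun ε : ℝ => (B + ε) ^ (1 / q)) 0 := by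
    have h : ContinuousAt (fun s : ℝ => s ^ (1 / q)) ((fun ε : ℝ => B + ε) 0) :=
      Real.continuousAt_rpow_const _ _ (Or.inr (by positivity))
    exact h.comp (continuousAt_const.add continuousAt_id)
  have htend : Filter.Tendsto (fun ε : ℝ => (A + ε) ^ (1 / p) * (B + ε) ^ (1 / q))
      (nhdsWithin 0 (Set.Ioi 0)) (nhds (A ^ (1 / p) * B ^ (1 / q))) := by
    have := ((c1.mul c2).continuousWithinAt (s := Set.Ioi (0 : ℝ)))
    simpa [ContinuousWithinAt, add_zero, Pi.mul_def] using this
  have hfinal : E.N (x * y) ≤ A ^ (1 / p) * B ^ (1 / q) := by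
    refine ge_of_tendsto htend ?_
    filter_upwards [self_mem_nhdsWithin] with ε hε
    exact hbound ε hε
  have hDnn : 0 ≤ A ^ (1 / p) * B ^ (1 / q) :=
    mul_nonneg (Real.rpow_nonneg hA0 _) (Real.rpow_nonneg hB0 _)
  linarith
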